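/- Stationarity of the Λ-family member: Let L(u,a) be a linear family, p ∈ P(X), and θ ∈ ℝ^k. Suppose q̂ ∈ L(u,a) satisfies, for every x ∈ S(p), 1 − Σ_{j=1}^k θ_j·(u_j(x) − a_j) > 0 and q̂(x) = p(x)·[1 − Σ_{j=1}^k θ_j·(u_j(x) − a_j)]^{-1}. Then for every q' ∈ L(u,a) with S(q') ⊆ S(p), one has Σ_{x ∈ S(p)} p(x)·(1 − q'(x)/q̂(x)) = 0. -/
import Mathlib


open scoped BigOperators Classical
open Filter Topology

noncomputable section

def pmfSet (X : Type*) [Fintype X] : Set (X → ℝ) :=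
  {p | (∀ x, 0 ≤ p x) ∧ ∑ x, p x = 1}

def Rn (X : Type*) [Fintype X] (n : ℕ) : Set (X → ℝ) :=
  {q | q ∈ pmfSet X ∧ ∀ x, ∃ k : ℕ, q x = (k : ℝ) / (n : ℝ)}

def ratPMF (X : Type*) [Fintype X] : Set (X → ℝ) :=
  {q | q ∈ pmfSet X ∧ ∀ x, ∃ r : ℚ, q x = (r : ℝ)}

def Ldiv {X : Type*} [Fintype X] (q p : X → ℝ) : EReal :=
  ∑ x, if p x = 0 then (0 : EReal)
    else if q x = 0 then (⊥ : EReal)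
    else (↑(p x * Real.log (q x)) : EReal)

def LSup {X : Type*} [Fintype X] (Q : Set (X → ℝ)) (p : X → ℝ) : EReal :=
  ⨆ q ∈ Q, Ldiv q p

def Idiv {X : Type*} [Fintype X] (p q : X → ℝ) : EReal :=
  ∑ x, if p x = 0 then (0 : EReal)
    else if q x = 0 then (⊤ : EReal)
    else (↑(p x * Real.log (p x / q x)) : EReal)

def typeProb {X : Type*} [Fintype X] (n : ℕ) (ν q : X → ℝ) : ℝ :=
  ∏ x, q x ^ ((n : ℝ) * ν x)

def post {X : Type*} [Fintype X] (n : ℕ) (ν : X → ℝ) (Q : Set (X → ℝ)) : ℝ :=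
  (∑' q : ↥(Q ∩ Rn X n), typeProb n ν ↑q) / (∑' q : ↥(Rn X n), typeProb n ν ↑q)

def postGen {X : Type*} [Fintype X] (w : (X → ℝ) → ℝ) (n : ℕ) (ν : X → ℝ)
    (Q : Set (X → ℝ)) : ℝ :=
  (∑' q : ↥(Q ∩ Rn X n), w ↑q * typeProb n ν ↑q) /
  (∑' q : ↥(Rn X n), w ↑q * typeProb n ν ↑q)

def tv {X : Type*} [Fintype X] (p q : X → ℝ) : ℝ := (1 / 2) * ∑ x, |p x - q x|

def tvBall {X : Type*} [Fintype X] (q : X → ℝ) (ε : ℝ) : Set (X → ℝ) :=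
  {p | p ∈ pmfSet X ∧ tv p q ≤ ε}

def elog (x : ℝ) : EReal := if x ≤ 0 then (⊥ : EReal) else (↑(Real.log x) : EReal)

def linFam {X : Type*} [Fintype X] {k : ℕ} (u : Fin k → X → ℝ) (a : Fin k → ℝ) :
    Set (X → ℝ) :=
  {q | q ∈ pmfSet X ∧ ∀ j, ∑ x, q x * u j x = a j}

def lambdaN {X : Type*} [Fintype X] (w : (X → ℝ) → ℝ) (n : ℕ) (ν : X → ℝ)
    (C : Set (X → ℝ)) : EReal :=
  ⨆ q ∈ C ∩ {q | q ∈ Rn X n ∧ 0 < w q},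
    (Ldiv q ν + (↑((1 : ℝ) / n * Real.log (w q)) : EReal))

def priorN {X : Type*} [Fintype X] (c : ℕ → (X → ℝ) → (X → ℝ)) (pr : (X → ℝ) → ℝ)
    (n : ℕ) (qn : X → ℝ) : ℝ :=
  ∑' q : ↥{q | q ∈ ratPMF X ∧ c n q = qn}, pr ↑q

/-- Stationarity of the Λ-family member. -/
theorem lambda_family_stationarity {X : Type*} [Fintype X] [Nonempty X] {k : ℕ}
    (u : Fin k → X → ℝ) (a : Fin k → ℝ)
    (p : X → ℝ) (hp : p ∈ pmfSet X) (θ : Fin k → ℝ)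
    (qhat : X → ℝ) (hqhat : qhat ∈ linFam u a)
    (hform : ∀ x, 0 < p x →
      0 < 1 - ∑ j, θ j * (u j x - a j) ∧
      qhat x = p x * (1 - ∑ j, θ j * (u j x - a j))⁻¹) :
    ∀ q' ∈ linFam u a, (∀ x, 0 < q' x → 0 < p x) →
      ∑ x ∈ Finset.univ.filter (fun x => 0 < p x), p x * (1 - q' x / qhat x) = 0 := by
  intro q' hq' hsupp
  obtain ⟨⟨hq'0, hq'1⟩, hq'lin⟩ := hq'
  obtain ⟨hp0, hp1⟩ := hp
  have hq'z : ∀ x, ¬ (0 < p x) → q' x = 0 := by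
    intro x hx
    by_contra h
    exact hx (hsupp x (lt_of_le_of_ne (hq'0 x) (Ne.symm h)))
  have key : ∀ x ∈ Finset.univ.filter (fun x => 0 < p x),
      p x * (1 - q' x / qhat x) = p x - q' x + q' x * (∑ j, θ j * (u j x - a j)) := by
    intro x hx
    simp only [Finset.mem_filter] at hx
    obtain ⟨hpos, hform2⟩ := hform x hx.2
    rw [hform2]
    have h1 : (1 - ∑ j, θ j * (u j x - a j)) ≠ 0 := ne_of_gt hpos
    have h2 : p x ≠ 0 := ne_of_gt hx.2
    field_simp
    ring
  rw [Finset.sum_congr rfl key]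
  have hsp : ∑ x ∈ Finset.univ.filter (fun x => 0 < p x), p x = 1 := by
    rw [← hp1]
    apply Finset.sum_subset (Finset.filter_subset _ _)
    intro x _ hx
    simp only [Finset.mem_filter, Finset.mem_univ, true_and] at hx
    linarith [hp0 x]
  have hsq : ∑ x ∈ Finset.univ.filter (fun x => 0 < p x), q' x = 1 := by
    rw [← hq'1]
    apply Finset.sum_subset (Finset.filter_subset _ _)
    intro x _ hx
    simp only [Finset.mem_filter, Finset.mem_univ, true_and] at hx
    exact hq'z x hx
  have hss : ∑ x ∈ Finset.univ.filter (fun x => 0 < p x),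
      q' x * (∑ j, θ j * (u j x - a j)) = 0 := by
    have hext : ∑ x ∈ Finset.univ.filter (fun x => 0 < p x),
        q' x * (∑ j, θ j * (u j x - a j))
        = ∑ x, q' x * (∑ j, θ j * (u j x - a j)) := by
      apply Finset.sum_subset (Finset.filter_subset _ _)
      intro x _ hx
      simp only [Finset.mem_filter, Finset.mem_univ, true_and] at hx
      rw [hq'z x hx, zero_mul]
    rw [hext]
    have : ∑ x, q' x * (∑ j, θ j * (u j x - a j))
        = ∑ j, θ j * ((∑ x, q' x * u j x) - a j * ∑ x, q' x) := by
      simp_rw [Finset.mul_sum]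
      rw [Finset.sum_comm]
      apply Finset.sum_congr rfl
      intro j _
      rw [← Finset.sum_sub_distrib, Finset.mul_sum]
      apply Finset.sum_congr rfl
      intro x _
      ring
    rw [this]
    apply Finset.sum_eq_zero
    intro j _
    rw [hq'lin j, hq'1]
    ring
  rw [Finset.sum_add_distrib, Finset.sum_sub_distrib, hsp, hsq, hss]
  ring
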